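/- Fix β>0 and θ,α∈ℝ. The function m^{α,θ} is a space–time harmonic function of total mass one for the CSBP kernels: (i) for every t>0, ∫_0^∞ m^{α,θ}(t,z) q^θ_t(z) dz = 1; (ii) for all u,t>0 and every x≥0, ∫_0^∞ m^{α,θ}(u+t,y) q^θ_t(x,y) dy = m^{α,θ}(u,x) (note m^{α,θ}(u+t,0)=0, so the extinction atom does not contribute). -/

import Mathlib

open MeasureTheory Filter

/-- `c^θ_t` from the paper, with time-scale parameter `β`. -/
noncomputable def cc (β θ t : ℝ) : ℝ :=
  if θ = 0 then 1 / (β * t) else 2 * θ / (Real.exp (2 * β * θ * t) - 1)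

/-- `c̃^θ_t` from the paper. -/
noncomputable def cct (β θ t : ℝ) : ℝ :=
  if θ = 0 then 1 / (β * t) else 2 * θ / (1 - Real.exp (-(2 * β * θ * t)))

/-- `u^θ(λ, t)` from the paper. -/
noncomputable def uu (β θ l t : ℝ) : ℝ :=
  if t = 0 then l else l * cc β θ t / (cct β θ t + l)

/-- entrance density `q^θ_t(x)`. -/
noncomputable def qe (β θ t x : ℝ) : ℝ :=
  cc β θ t * cct β θ t * Real.exp (-(cct β θ t * x))

/-- transition density `q^θ_t(x, y)`. -/
noncomputable def qt (β θ t x y : ℝ) : ℝ :=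
  x * cc β θ t * cct β θ t * Real.exp (-((x + y) * cc β θ t) - 2 * θ * y) *
    ∑' k : ℕ, (x * y * cc β θ t * cct β θ t) ^ k /
      ((Nat.factorial k : ℝ) * (Nat.factorial (k + 1) : ℝ))

/-- the space-time harmonic function `m^{α,θ}(t, z)`. -/
noncomputable def mm (β θ α t z : ℝ) : ℝ :=
  z * Real.exp (-(α / cc β θ t)) *
    ∑' i : ℕ, (α * z) ^ i * Real.exp (((i : ℝ) + 1) * (2 * β * θ * t)) /
      ((Nat.factorial i : ℝ) * (Nat.factorial (i + 1) : ℝ))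

/-- the space-time harmonic function `m̃^{α,θ}(t, z)`. -/
noncomputable def mmt (β θ α t z : ℝ) : ℝ :=
  z * Real.exp (2 * θ * z) * Real.exp (-(α / cct β θ t)) *
    ∑' i : ℕ, (α * z) ^ i * Real.exp (-(((i : ℝ) + 1) * (2 * β * θ * t))) /
      ((Nat.factorial i : ℝ) * (Nat.factorial (i + 1) : ℝ))

/-! ### Auxiliary lemmas -/

lemma int_pow_exp (n : ℕ) {b : ℝ} (hb : 0 < b) :
    ∫ y in Set.Ioi (0:ℝ), y ^ n * Real.exp (-(b*y)) = (n.factorial : ℝ) / b^(n+1) := by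
  have := Real.integral_rpow_mul_exp_neg_mul_Ioi (a := (n:ℝ)+1) (by positivity) hb
  simp only [add_sub_cancel_right] at this
  rw [show ((n:ℝ)+1) = ((n+1 : ℕ):ℝ) by push_cast; ring] at this
  simp only [Real.rpow_natCast] at this
  rw [this, show ((n+1:ℕ):ℝ) = (n:ℝ)+1 by push_cast; ring, Real.Gamma_nat_eq_factorial]
  rw [one_div, inv_pow]
  field_simp

lemma intOn_pow_exp (n : ℕ) {b : ℝ} (hb : 0 < b) :
    IntegrableOn (fun y : ℝ => y ^ n * Real.exp (-(b*y))) (Set.Ioi 0) := by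
  have := integrableOn_rpow_mul_exp_neg_mul_rpow (p := 1) (s := (n:ℝ)) (b := b)
    (by linarith [Nat.cast_nonneg (α:=ℝ) n]) one_pos hb
  simpa [Real.rpow_natCast, Real.rpow_one, neg_mul] using this

lemma cc_pos {β θ t : ℝ} (hβ : 0 < β) (ht : 0 < t) : 0 < cc β θ t := by
  unfold cc
  rcases eq_or_ne θ 0 with h | h
  · simp only [h, if_pos rfl]; exact one_div_pos.mpr (mul_pos hβ ht)
  · rw [if_neg h]
    rcases lt_or_gt_of_ne h with hneg | hpos
    · have hbt := mul_pos hβ ht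
      have hs : 2 * β * θ * t < 0 := by nlinarith
      have h1 : Real.exp (2*β*θ*t) < 1 := by
        rw [← Real.exp_zero]; exact Real.exp_lt_exp.2 hs
      exact div_pos_of_neg_of_neg (by linarith) (by linarith)
    · have hbt := mul_pos hβ ht
      have hs : 0 < 2 * β * θ * t := by nlinarith
      have h1 : 1 < Real.exp (2*β*θ*t) := by
        rw [← Real.exp_zero]; exact Real.exp_lt_exp.2 hs
      exact div_pos (by linarith) (by linarith)

lemma cct_eq_mul (β θ t : ℝ) : cct β θ t = cc β θ t * Real.exp (2*β*θ*t) := by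
  unfold cc cct
  rcases eq_or_ne θ 0 with h | h
  · simp [h]
  · rw [if_neg h, if_neg h]
    rw [show (1 - Real.exp (-(2*β*θ*t))) = (Real.exp (2*β*θ*t) - 1) / Real.exp (2*β*θ*t) by
      rw [Real.exp_neg]; field_simp]
    rw [div_div_eq_mul_div, div_mul_eq_mul_div, mul_comm (2*θ)]

lemma cct_pos {β θ t : ℝ} (hβ : 0 < β) (ht : 0 < t) : 0 < cct β θ t := by
  rw [cct_eq_mul]; exact mul_pos (cc_pos hβ ht) (Real.exp_pos _)

lemma cct_eq_add {β θ t : ℝ} (hβ : 0 < β) (ht : 0 < t) :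
    cct β θ t = cc β θ t + 2 * θ := by
  unfold cc cct
  rcases eq_or_ne θ 0 with h | h
  · simp [h]
  · rw [if_neg h, if_neg h]
    have hs : 2 * β * θ * t ≠ 0 := by
      simp only [mul_ne_zero_iff]; exact ⟨⟨⟨two_ne_zero, hβ.ne'⟩, h⟩, ht.ne'⟩
    have h1 : Real.exp (2*β*θ*t) - 1 ≠ 0 := by
      intro hc; exact hs (Real.exp_injective (by rw [Real.exp_zero]; linarith))
    have h2 : 1 - Real.exp (-(2*β*θ*t)) ≠ 0 := by
      rw [Real.exp_neg]
      intro hc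
      have := Real.exp_pos (2*β*θ*t)
      have : Real.exp (2*β*θ*t) = 1 := by field_simp at hc; nlinarith [hc]
      exact hs (Real.exp_injective (by rw [Real.exp_zero]; exact this))
    rw [Real.exp_neg] at h2 ⊢
    have h3 := Real.exp_pos (2*β*θ*t)
    field_simp
    have h4 : -1 + Real.exp (2*θ*β*t) ≠ 0 := by
      rw [show 2*θ*β*t = 2*β*θ*t by ring]; intro hc; exact h1 (by linarith)
    have hw : (-1 + Real.exp (2*θ*β*t)) * (-1 + Real.exp (2*θ*β*t))⁻¹ = 1 := mul_inv_cancel₀ h4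
    linear_combination hw

lemma cc_flow (β θ u t : ℝ) :
    (cc β θ (u+t))⁻¹ = Real.exp (2*β*θ*u) * (cc β θ t)⁻¹ + (cc β θ u)⁻¹ := by
  unfold cc
  rcases eq_or_ne θ 0 with h | h
  · simp [h]; ring
  · rw [if_neg h, if_neg h, if_neg h]
    rw [show 2*β*θ*(u+t) = 2*β*θ*u + 2*β*θ*t by ring, Real.exp_add]
    rw [inv_div, inv_div, inv_div]
    field_simp
    ring

/-! ### The Bessel-type series -/

noncomputable def bes (w : ℝ) : ℝ :=
  ∑' k : ℕ, w ^ k / ((k.factorial : ℝ) * ((k+1).factorial : ℝ))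

lemma bes_term_le (w : ℝ) (k : ℕ) :
    ‖w ^ k / ((k.factorial : ℝ) * ((k+1).factorial : ℝ))‖ ≤ |w| ^ k / (k.factorial : ℝ) := by
  rw [norm_div, norm_mul, Real.norm_natCast, Real.norm_natCast, norm_pow, Real.norm_eq_abs]
  rw [div_le_div_iff₀ (by positivity) (by positivity)]
  have h1 : (1:ℝ) ≤ ((k+1).factorial : ℝ) := by exact_mod_cast (k+1).factorial_pos
  nlinarith [mul_nonneg (mul_nonneg (pow_nonneg (abs_nonneg w) k)
    (Nat.cast_nonneg (α := ℝ) k.factorial)) (sub_nonneg.mpr h1)]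

lemma bes_summable_norm (w : ℝ) :
    Summable (fun k : ℕ => ‖w ^ k / ((k.factorial : ℝ) * ((k+1).factorial : ℝ))‖) :=
  Summable.of_nonneg_of_le (fun _ => norm_nonneg _) (bes_term_le w)
    (Real.summable_pow_div_factorial _)

lemma bes_summable (w : ℝ) :
    Summable (fun k : ℕ => w ^ k / ((k.factorial : ℝ) * ((k+1).factorial : ℝ))) :=
  (bes_summable_norm w).of_norm

lemma exp_tsum (x : ℝ) : Real.exp x = ∑' n : ℕ, x ^ n / (n.factorial : ℝ)  := by
  rw [Real.exp_eq_exp_ℝ, NormedSpace.exp_eq_tsum_div]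

lemma exp_summable_norm (x : ℝ) : Summable (fun n : ℕ => ‖x ^ n / (n.factorial : ℝ)‖) := by
  have h : ∀ n : ℕ, ‖x ^ n / (n.factorial : ℝ)‖ = |x| ^ n / (n.factorial : ℝ) := by
    intro n
    rw [norm_div, Real.norm_natCast, norm_pow, Real.norm_eq_abs]
  rw [funext h]
  exact Real.summable_pow_div_factorial _

/-- rewriting `mm` in terms of `bes`. -/
lemma mm_eq (β θ α t z : ℝ) :
    mm β θ α t z = z * Real.exp (-(α / cc β θ t)) *
      (Real.exp (2*β*θ*t) * bes (α * z * Real.exp (2*β*θ*t))) := by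
  unfold mm bes
  rw [← tsum_mul_left, ← tsum_mul_left, ← tsum_mul_left]
  apply tsum_congr
  intro i
  have h1 : Real.exp (((i:ℝ)+1) * (2*β*θ*t)) = Real.exp (2*β*θ*t) ^ (i+1) := by
    rw [show ((i:ℝ)+1) * (2*β*θ*t) = 2*β*θ*t * ((i+1:ℕ):ℝ) by push_cast; ring]
    rw [Real.exp_mul, Real.rpow_natCast]
  rw [h1, mul_pow, mul_pow, pow_succ]
  ring

/-- rewriting `qt` in terms of `bes`. -/
lemma qt_eq {β θ t : ℝ} (hβ : 0 < β) (ht : 0 < t) (x y : ℝ) :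
    qt β θ t x y = x * cc β θ t * cct β θ t * Real.exp (-(x * cc β θ t)) *
      Real.exp (-(cct β θ t * y)) * bes (x * y * cc β θ t * cct β θ t) := by
  unfold qt bes
  rw [show -((x + y) * cc β θ t) - 2 * θ * y
      = -(x * cc β θ t) + -(cct β θ t * y) by rw [cct_eq_add hβ ht]; ring]
  rw [Real.exp_add]
  ring

/-! ### the Vandermonde-type identity -/

lemma nat_vander (i k : ℕ) :
    ∑ j ∈ Finset.range (min i k + 1), i.choose j * (k+1).choose (j+1)
      = (i+k+1).choose (i+1) := by
  have h := Nat.add_choose_eq i (k+1) k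
  rw [Finset.Nat.sum_antidiagonal_eq_sum_range_succ_mk] at h
  have h2 : ∀ a ∈ Finset.range (k+1), i.choose a * (k+1).choose (k - a)
      = i.choose a * (k+1).choose (a+1) := by
    intro a ha
    rw [Finset.mem_range] at ha
    congr 1
    rw [show k - a = (k+1) - (a+1) by omega]
    rw [Nat.choose_symm (by omega)]
  rw [Finset.sum_congr rfl h2] at h
  have h3 : ∑ j ∈ Finset.range (min i k + 1), i.choose j * (k+1).choose (j+1)
      = ∑ j ∈ Finset.range (k+1), i.choose j * (k+1).choose (j+1) := by
    apply Finset.sum_subset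
    · intro a ha; rw [Finset.mem_range] at *; omega
    · intro a ha ha2
      rw [Finset.mem_range] at *
      have : i < a := by omega
      rw [Nat.choose_eq_zero_of_lt this, zero_mul]
  rw [h3, ← h, show i+(k+1) = i+k+1 by omega]
  have h4 := Nat.choose_symm (n := i+k+1) (k := i+1) (by omega)
  rw [show i+k+1-(i+1) = k from by omega] at h4
  exact h4

lemma real_vander (i k : ℕ) :
    ∑ j ∈ Finset.range (min i k + 1),
        (1:ℝ) / ((j.factorial:ℝ) * ((j+1).factorial:ℝ) * ((i-j).factorial:ℝ) * ((k-j).factorial:ℝ))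
      = ((i+k+1).factorial : ℝ) /
        ((i.factorial:ℝ) * ((i+1).factorial:ℝ) * (k.factorial:ℝ) * ((k+1).factorial:ℝ)) := by
  have key : ∀ j ∈ Finset.range (min i k + 1),
      (1:ℝ) / ((j.factorial:ℝ) * ((j+1).factorial:ℝ) * ((i-j).factorial:ℝ) * ((k-j).factorial:ℝ))
        = ((i.choose j * (k+1).choose (j+1) : ℕ) : ℝ) / ((i.factorial:ℝ) * ((k+1).factorial:ℝ)) := by
    intro j hj
    rw [Finset.mem_range] at hj
    have hji : j ≤ i := by omega
    have hjk : j ≤ k := by omega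
    rw [Nat.cast_mul, Nat.cast_choose ℝ hji, Nat.cast_choose ℝ (by omega : j+1 ≤ k+1)]
    rw [show (k+1) - (j+1) = k - j by omega]
    have f1 : (j.factorial : ℝ) ≠ 0 := Nat.cast_ne_zero.mpr j.factorial_ne_zero
    have f2 : ((j+1).factorial : ℝ) ≠ 0 := Nat.cast_ne_zero.mpr (j+1).factorial_ne_zero
    have f3 : ((i-j).factorial : ℝ) ≠ 0 := Nat.cast_ne_zero.mpr (i-j).factorial_ne_zero
    have f4 : ((k-j).factorial : ℝ) ≠ 0 := Nat.cast_ne_zero.mpr (k-j).factorial_ne_zero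
    have f5 : (i.factorial : ℝ) ≠ 0 := Nat.cast_ne_zero.mpr i.factorial_ne_zero
    have f6 : ((k+1).factorial : ℝ) ≠ 0 := Nat.cast_ne_zero.mpr (k+1).factorial_ne_zero
    field_simp
  rw [Finset.sum_congr rfl key, ← Finset.sum_div, ← Nat.cast_sum, nat_vander,
    Nat.cast_choose ℝ (by omega : i+1 ≤ i+k+1), show (i+k+1) - (i+1) = k by omega]
  rw [div_div]
  congr 1
  ring

set_option maxHeartbeats 1600000 in
/-- the key product identity for Bessel-type series. -/
lemma star_identity (A B : ℝ) :
    ∑' p : ℕ × ℕ,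
        A ^ p.1 * B ^ p.2 * (((p.1 + p.2 + 1).factorial : ℝ)) /
          ((p.1.factorial : ℝ) * ((p.1+1).factorial : ℝ) * (p.2.factorial : ℝ) *
            ((p.2+1).factorial : ℝ))
      = Real.exp (A + B) * bes (A * B) := by
  classical
  have hgn : Summable (fun m : ℕ => ‖A ^ m / (m.factorial : ℝ)‖) := exp_summable_norm A
  have hhn : Summable (fun n : ℕ => ‖B ^ n / (n.factorial : ℝ)‖) := exp_summable_norm B
  have hfn : Summable (fun j : ℕ =>
      ‖(A*B) ^ j / ((j.factorial : ℝ) * ((j+1).factorial : ℝ))‖) := bes_summable_norm (A*B)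
  have hgh_norm : Summable (fun mn : ℕ × ℕ =>
      ‖A ^ mn.1 / (mn.1.factorial : ℝ) * (B ^ mn.2 / (mn.2.factorial : ℝ))‖) := by
    have := summable_mul_of_summable_norm
      (f := fun m : ℕ => ‖A ^ m / (m.factorial : ℝ)‖)
      (g := fun n : ℕ => ‖B ^ n / (n.factorial : ℝ)‖)
      (by simpa only [norm_norm] using hgn) (by simpa only [norm_norm] using hhn)
    simpa only [← norm_mul] using this
  have hS : Summable (fun q : ℕ × (ℕ × ℕ) =>
      (A*B) ^ q.1 / ((q.1.factorial : ℝ) * ((q.1+1).factorial : ℝ)) *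
        (A ^ q.2.1 / (q.2.1.factorial : ℝ) * (B ^ q.2.2 / (q.2.2.factorial : ℝ)))) :=
    summable_mul_of_summable_norm hfn hgh_norm
  -- RHS as a triple sum
  have hrhs : Real.exp (A + B) * bes (A * B)
      = ∑' q : ℕ × (ℕ × ℕ),
          (A*B) ^ q.1 / ((q.1.factorial : ℝ) * ((q.1+1).factorial : ℝ)) *
            (A ^ q.2.1 / (q.2.1.factorial : ℝ) * (B ^ q.2.2 / (q.2.2.factorial : ℝ))) := by
    rw [Real.exp_add, exp_tsum A, exp_tsum B,
      tsum_mul_tsum_of_summable_norm hgn hhn, mul_comm _ (bes (A*B))]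
    unfold bes
    rw [tsum_mul_tsum_of_summable_norm (bes_summable_norm (A*B)) hgh_norm]
  set e : ℕ × (ℕ × ℕ) → (ℕ × ℕ) × ℕ := fun q => ((q.1 + q.2.1, q.1 + q.2.2), q.1) with he_def
  set S' : (ℕ × ℕ) × ℕ → ℝ := fun r =>
    if r.2 ≤ r.1.1 ∧ r.2 ≤ r.1.2 then
      (A*B) ^ r.2 / ((r.2.factorial : ℝ) * ((r.2+1).factorial : ℝ)) *
        (A ^ (r.1.1 - r.2) / ((r.1.1 - r.2).factorial : ℝ) *
          (B ^ (r.1.2 - r.2) / ((r.1.2 - r.2).factorial : ℝ)))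
    else 0 with hS'_def
  have he : Function.Injective e := by
    rintro ⟨j, m, n⟩ ⟨j', m', n'⟩ hab
    simp only [he_def, Prod.mk.injEq] at hab
    simp only [Prod.mk.injEq]
    omega
  have hcomp : ∀ q : ℕ × (ℕ × ℕ), S' (e q) =
      (A*B) ^ q.1 / ((q.1.factorial : ℝ) * ((q.1+1).factorial : ℝ)) *
        (A ^ q.2.1 / (q.2.1.factorial : ℝ) * (B ^ q.2.2 / (q.2.2.factorial : ℝ))) := by
    rintro ⟨j, m, n⟩
    simp only [he_def, hS'_def]
    rw [if_pos ⟨Nat.le_add_right _ _, Nat.le_add_right _ _⟩]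
    rw [Nat.add_sub_cancel_left, Nat.add_sub_cancel_left]
  have hzero : ∀ r ∉ Set.range e, S' r = 0 := by
    rintro ⟨⟨i, k⟩, j⟩ hr
    by_contra hne
    apply hr
    have hcond : j ≤ i ∧ j ≤ k := by
      by_contra hc
      exact hne (by simp only [hS'_def]; exact if_neg hc)
    refine ⟨(j, (i - j, k - j)), ?_⟩
    simp only [he_def, Prod.mk.injEq]
    refine ⟨⟨?_, ?_⟩, trivial⟩ <;> omega
  have hsupp : Function.support S' ⊆ Set.range e := by
    intro r hr
    by_contra hc
    exact hr (hzero r hc)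
  have htsum_e : (∑' q : ℕ × (ℕ × ℕ),
      (A*B) ^ q.1 / ((q.1.factorial : ℝ) * ((q.1+1).factorial : ℝ)) *
        (A ^ q.2.1 / (q.2.1.factorial : ℝ) * (B ^ q.2.2 / (q.2.2.factorial : ℝ))))
      = ∑' r, S' r := by
    rw [← he.tsum_eq hsupp]
    exact tsum_congr fun q => (hcomp q).symm
  have hS' : Summable S' := by
    rw [← he.summable_iff hzero]
    exact hS.congr fun q => (hcomp q).symm
  rw [hrhs, htsum_e, Summable.tsum_prod hS']
  apply tsum_congr
  intro ik
  obtain ⟨i, k⟩ := ik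
  rw [tsum_eq_sum (s := Finset.range (min i k + 1)) (by
    intro j hj
    rw [Finset.mem_range] at hj
    simp only [hS'_def]
    exact if_neg (by omega))]
  have hterm : ∀ j ∈ Finset.range (min i k + 1),
      S' ((i, k), j) = A ^ i * B ^ k *
        ((1:ℝ) / ((j.factorial:ℝ) * ((j+1).factorial:ℝ) * ((i-j).factorial:ℝ) *
          ((k-j).factorial:ℝ))) := by
    intro j hj
    rw [Finset.mem_range] at hj
    have hji : j ≤ i := by omega
    have hjk : j ≤ k := by omega
    simp only [hS'_def]
    rw [if_pos ⟨hji, hjk⟩]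
    have hA : (A*B) ^ j * (A ^ (i-j) * B ^ (k-j)) = A ^ i * B ^ k := by
      rw [mul_pow, mul_mul_mul_comm, ← pow_add, ← pow_add,
        Nat.add_sub_cancel' hji, Nat.add_sub_cancel' hjk]
    rw [div_mul_div_comm, div_mul_div_comm, hA]
    rw [mul_one_div]
    congr 1
    ring
  rw [Finset.sum_congr rfl hterm, ← Finset.mul_sum, real_vander]
  ring
section Part1
variable (β θ α : ℝ)

set_option maxHeartbeats 1600000 in
lemma part_one (hβ : 0 < β) (t : ℝ) (ht : 0 < t) :
    (∫ z in Set.Ioi (0 : ℝ), mm β θ α t z * qe β θ t z) = 1 := by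
  have hc := cc_pos (θ := θ) hβ ht
  have hct := cct_pos (θ := θ) hβ ht
  have hcne : cc β θ t ≠ 0 := hc.ne'
  have hctne : cct β θ t ≠ 0 := hct.ne'
  have hE : (0:ℝ) < Real.exp (2*β*θ*t) := Real.exp_pos _
  have hX : (0:ℝ) < Real.exp (-(α / cc β θ t)) := Real.exp_pos _
  -- the coefficient sequence
  set K : ℕ → ℝ := fun i => Real.exp (-(α / cc β θ t)) * Real.exp (2*β*θ*t) *
      cc β θ t * cct β θ t *
      ((α * Real.exp (2*β*θ*t)) ^ i / ((i.factorial:ℝ) * ((i+1).factorial:ℝ))) with hK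
  have key : ∀ z : ℝ, mm β θ α t z * qe β θ t z
      = ∑' i : ℕ, K i * (z^(i+1) * Real.exp (-(cct β θ t * z))) := by
    intro z
    rw [mm_eq]
    unfold qe bes
    rw [← tsum_mul_left, ← tsum_mul_left, ← tsum_mul_right]
    apply tsum_congr
    intro i
    simp only [hK, mul_pow, pow_succ]
    ring
  have hfac : ∀ i : ℕ, (0:ℝ) < (i.factorial:ℝ) * ((i+1).factorial:ℝ) := fun i =>
    mul_pos (Nat.cast_pos.mpr i.factorial_pos) (Nat.cast_pos.mpr (i+1).factorial_pos)
  have hint : ∀ i : ℕ, IntegrableOn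
      (fun z : ℝ => K i * (z^(i+1) * Real.exp (-(cct β θ t * z)))) (Set.Ioi 0) :=
    fun i => (intOn_pow_exp (i+1) hct).const_mul _
  have hnorm : ∀ i : ℕ,
      (∫ z in Set.Ioi (0:ℝ), ‖K i * (z^(i+1) * Real.exp (-(cct β θ t * z)))‖)
        = |K i| * (((i+1).factorial:ℝ) / cct β θ t ^ (i+2)) := by
    intro i
    have heq : Set.EqOn (fun z : ℝ => ‖K i * (z^(i+1) * Real.exp (-(cct β θ t * z)))‖)
        (fun z : ℝ => |K i| * (z^(i+1) * Real.exp (-(cct β θ t * z)))) (Set.Ioi 0) := by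
      intro z hz
      have hz0 : (0:ℝ) < z := hz
      simp only [norm_mul, Real.norm_eq_abs]
      rw [abs_of_nonneg (pow_nonneg hz0.le _), abs_of_pos (Real.exp_pos _)]
    rw [setIntegral_congr_fun measurableSet_Ioi heq, MeasureTheory.integral_const_mul,
      int_pow_exp (i+1) hct]
  have habs : ∀ i : ℕ, |K i| = Real.exp (-(α / cc β θ t)) * Real.exp (2*β*θ*t) *
      cc β θ t * cct β θ t *
      (|α * Real.exp (2*β*θ*t)| ^ i / ((i.factorial:ℝ) * ((i+1).factorial:ℝ))) := by
    intro i
    rw [hK]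
    rw [abs_mul, abs_div, abs_pow,
      abs_of_pos (mul_pos (mul_pos (mul_pos hX hE) hc) hct), abs_of_pos (hfac i)]
  have hsum : Summable (fun i : ℕ =>
      |K i| * (((i+1).factorial:ℝ) / cct β θ t ^ (i+2))) := by
    have heq2 : (fun i : ℕ => |K i| * (((i+1).factorial:ℝ) / cct β θ t ^ (i+2)))
        = fun i : ℕ => (Real.exp (-(α / cc β θ t)) * Real.exp (2*β*θ*t) * cc β θ t / cct β θ t) *
            ((|α * Real.exp (2*β*θ*t)| / cct β θ t) ^ i / (i.factorial:ℝ)) := by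
      funext i
      rw [habs i]
      have f1 : (i.factorial:ℝ) ≠ 0 := (Nat.cast_pos.mpr i.factorial_pos).ne'
      have f2 : ((i+1).factorial:ℝ) ≠ 0 := (Nat.cast_pos.mpr (i+1).factorial_pos).ne'
      field_simp [div_pow]
      have hpow : cct β θ t ^ i * (cct β θ t)⁻¹ ^ i = 1 := by
        rw [← mul_pow, mul_inv_cancel₀ hctne, one_pow]
      linear_combination (-(cct β θ t ^ 2 * |α * Real.exp (2 * β * θ * t)| ^ i)) * hpow
    rw [heq2]
    exact (Real.summable_pow_div_factorial _).mul_left _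
  rw [show (fun z : ℝ => mm β θ α t z * qe β θ t z)
    = fun z : ℝ => ∑' i : ℕ, K i * (z^(i+1) * Real.exp (-(cct β θ t * z))) from funext key]
  rw [← MeasureTheory.integral_tsum_of_summable_integral_norm hint
    (hsum.congr (fun i => (hnorm i).symm))]
  have hval : ∀ i : ℕ, (∫ z in Set.Ioi (0:ℝ), K i * (z^(i+1) * Real.exp (-(cct β θ t * z))))
      = K i * (((i+1).factorial:ℝ) / cct β θ t ^ (i+2)) := by
    intro i
    rw [MeasureTheory.integral_const_mul, int_pow_exp (i+1) hct]
  rw [tsum_congr hval]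
  have hterm2 : ∀ i : ℕ, K i * (((i+1).factorial:ℝ) / cct β θ t ^ (i+2))
      = Real.exp (-(α / cc β θ t)) * ((α / cc β θ t) ^ i / (i.factorial:ℝ)) := by
    intro i
    rw [hK, cct_eq_mul β θ t]
    have f1 : (i.factorial:ℝ) ≠ 0 := (Nat.cast_pos.mpr i.factorial_pos).ne'
    have f2 : ((i+1).factorial:ℝ) ≠ 0 := (Nat.cast_pos.mpr (i+1).factorial_pos).ne'
    field_simp [div_pow, mul_pow]
    have hpow2 : cc β θ t ^ i * (cc β θ t)⁻¹ ^ i = 1 := by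
      rw [← mul_pow, mul_inv_cancel₀ hcne, one_pow]
    linear_combination (-(cc β θ t ^ 2 * Real.exp (2 * β * θ * t) ^ 2 *
      Real.exp (2 * β * θ * t) ^ i * α ^ i)) * hpow2
  rw [tsum_congr hterm2, tsum_mul_left, ← exp_tsum, ← Real.exp_add,
    show -(α / cc β θ t) + α / cc β θ t = 0 by ring, Real.exp_zero]

end Part1
section Part2

lemma choose_le_two_pow (n r : ℕ) : n.choose r ≤ 2^n := by
  rcases le_or_gt r n with h | h
  · calc n.choose r ≤ ∑ j ∈ Finset.range (n+1), n.choose j :=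
        Finset.single_le_sum (f := fun j => n.choose j) (fun _ _ => Nat.zero_le _)
          (Finset.mem_range.mpr (by omega))
    _ = 2^n := Nat.sum_range_choose n
  · rw [Nat.choose_eq_zero_of_lt h]; exact Nat.zero_le _

lemma fact_le_two_pow (i k : ℕ) :
    ((i+k+1).factorial : ℝ) / (((i+1).factorial:ℝ) * ((k+1).factorial:ℝ)) ≤ 2^(i+k+1) := by
  have hnat : (i+k+1).factorial ≤ 2^(i+k+1) * ((i+1).factorial * (k+1).factorial) := by
    have h1 : (i+k+1).choose (i+1) * ((i+1).factorial * k.factorial) = (i+k+1).factorial := by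
      have := Nat.choose_mul_factorial_mul_factorial (n := i+k+1) (k := i+1) (by omega)
      rw [show i+k+1-(i+1) = k by omega] at this
      rw [← mul_assoc]
      exact this
    calc (i+k+1).factorial = (i+k+1).choose (i+1) * ((i+1).factorial * k.factorial) := h1.symm
      _ ≤ 2^(i+k+1) * ((i+1).factorial * k.factorial) :=
          Nat.mul_le_mul_right _ (choose_le_two_pow _ _)
      _ ≤ 2^(i+k+1) * ((i+1).factorial * (k+1).factorial) := by
          apply Nat.mul_le_mul_left
          exact Nat.mul_le_mul_left _ (Nat.factorial_le (by omega))
  rw [div_le_iff₀ (by positivity)]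
  calc ((i+k+1).factorial : ℝ) ≤ ((2^(i+k+1) * ((i+1).factorial * (k+1).factorial) : ℕ) : ℝ) := by
        exact_mod_cast hnat
    _ = 2^(i+k+1) * (((i+1).factorial:ℝ) * ((k+1).factorial:ℝ)) := by push_cast; ring

set_option maxHeartbeats 4000000 in
lemma part_two (β θ α : ℝ) (hβ : 0 < β) (u t : ℝ) (hu : 0 < u) (ht : 0 < t)
    (x : ℝ) (hx : 0 ≤ x) :
    (∫ y in Set.Ioi (0 : ℝ), mm β θ α (u + t) y * qt β θ t x y) = mm β θ α u x := by
  have hc := cc_pos (θ := θ) hβ ht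
  have hct := cct_pos (θ := θ) hβ ht
  have hcu := cc_pos (θ := θ) hβ hu
  have hcne : cc β θ t ≠ 0 := hc.ne'
  have hctne : cct β θ t ≠ 0 := hct.ne'
  have hcune : cc β θ u ≠ 0 := hcu.ne'
  have hEt : (0:ℝ) < Real.exp (2*β*θ*t) := Real.exp_pos _
  have hEu : (0:ℝ) < Real.exp (2*β*θ*u) := Real.exp_pos _
  have hXc : (0:ℝ) < Real.exp (-(α / cc β θ (u+t))) := Real.exp_pos _
  set a : ℝ := α * Real.exp (2*β*θ*u) * Real.exp (2*β*θ*t) with ha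
  set b : ℝ := x * cc β θ t * cct β θ t with hb
  set D : ℝ := Real.exp (-(α / cc β θ (u+t))) * Real.exp (2*β*θ*u) * Real.exp (2*β*θ*t) *
      x * cc β θ t * cct β θ t * Real.exp (-(x * cc β θ t)) with hD
  set K : ℕ × ℕ → ℝ := fun p => D * (a ^ p.1 * b ^ p.2) /
      ((p.1.factorial:ℝ) * ((p.1+1).factorial:ℝ) * (p.2.factorial:ℝ) *
        ((p.2+1).factorial:ℝ)) with hK
  have hfac : ∀ i : ℕ, (0:ℝ) < (i.factorial:ℝ) := fun i => Nat.cast_pos.mpr i.factorial_pos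
  -- pointwise expansion of the integrand
  have key : ∀ y : ℝ, mm β θ α (u+t) y * qt β θ t x y
      = ∑' p : ℕ × ℕ, K p * (y ^ (p.1 + p.2 + 1) * Real.exp (-(cct β θ t * y))) := by
    intro y
    have hprod : bes (a*y) * bes (b*y) = ∑' p : ℕ × ℕ,
        ((a*y) ^ p.1 / ((p.1.factorial:ℝ) * ((p.1+1).factorial:ℝ))) *
          ((b*y) ^ p.2 / ((p.2.factorial:ℝ) * ((p.2+1).factorial:ℝ))) := by
      unfold bes
      exact tsum_mul_tsum_of_summable_norm (bes_summable_norm _) (bes_summable_norm _)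
    have h1 : ∀ p : ℕ × ℕ, K p * (y ^ (p.1 + p.2 + 1) * Real.exp (-(cct β θ t * y)))
        = (D * Real.exp (-(cct β θ t * y)) * y) *
            (((a*y) ^ p.1 / ((p.1.factorial:ℝ) * ((p.1+1).factorial:ℝ))) *
              ((b*y) ^ p.2 / ((p.2.factorial:ℝ) * ((p.2+1).factorial:ℝ)))) := by
      intro p
      simp only [hK, mul_pow, pow_add, pow_one]
      ring
    rw [tsum_congr h1, tsum_mul_left, ← hprod]
    rw [mm_eq β θ α (u+t) y, qt_eq hβ ht x y,
      show 2*β*θ*(u+t) = 2*β*θ*u + 2*β*θ*t by ring, Real.exp_add,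
      show α * y * (Real.exp (2*β*θ*u) * Real.exp (2*β*θ*t)) = a * y by rw [ha]; ring,
      show x * y * cc β θ t * cct β θ t = b * y by rw [hb]; ring, hD]
    ring
  -- integrability and norms
  have hint : ∀ p : ℕ × ℕ, MeasureTheory.IntegrableOn
      (fun y : ℝ => K p * (y ^ (p.1 + p.2 + 1) * Real.exp (-(cct β θ t * y))))
      (Set.Ioi 0) :=
    fun p => (intOn_pow_exp (p.1+p.2+1) hct).const_mul _
  have hnorm : ∀ p : ℕ × ℕ,
      (∫ y in Set.Ioi (0:ℝ), ‖K p * (y ^ (p.1+p.2+1) * Real.exp (-(cct β θ t * y)))‖)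
        = |K p| * (((p.1+p.2+1).factorial:ℝ) / cct β θ t ^ ((p.1+p.2+1)+1)) := by
    intro p
    have heq : Set.EqOn
        (fun y : ℝ => ‖K p * (y ^ (p.1+p.2+1) * Real.exp (-(cct β θ t * y)))‖)
        (fun y : ℝ => |K p| * (y ^ (p.1+p.2+1) * Real.exp (-(cct β θ t * y))))
        (Set.Ioi 0) := by
      intro y hy
      have hy0 : (0:ℝ) < y := hy
      simp only [norm_mul, Real.norm_eq_abs]
      rw [abs_of_nonneg (pow_nonneg hy0.le _), abs_of_pos (Real.exp_pos _)]
    rw [MeasureTheory.setIntegral_congr_fun measurableSet_Ioi heq,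
      MeasureTheory.integral_const_mul, int_pow_exp (p.1+p.2+1) hct]
  have habs : ∀ p : ℕ × ℕ, |K p| = |D| * (|a| ^ p.1 * |b| ^ p.2) /
      ((p.1.factorial:ℝ) * ((p.1+1).factorial:ℝ) * (p.2.factorial:ℝ) *
        ((p.2+1).factorial:ℝ)) := by
    intro p
    rw [hK]
    rw [abs_div, abs_mul D (a ^ p.1 * b ^ p.2), abs_mul (a ^ p.1) (b ^ p.2),
      abs_pow, abs_pow,
      abs_of_pos (mul_pos (mul_pos (mul_pos (hfac p.1) (hfac (p.1+1))) (hfac p.2))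
        (hfac (p.2+1)))]
  -- summability of the integral norms
  have hsum : Summable (fun p : ℕ × ℕ =>
      |K p| * (((p.1+p.2+1).factorial:ℝ) / cct β θ t ^ ((p.1+p.2+1)+1))) := by
    have hmajS : Summable (fun p : ℕ × ℕ => (|D| * 2 / cct β θ t ^ 2) *
        (((2*|a|/cct β θ t) ^ p.1 / (p.1.factorial:ℝ)) *
          ((2*|b|/cct β θ t) ^ p.2 / (p.2.factorial:ℝ)))) := by
      apply Summable.mul_left
      exact summable_mul_of_summable_norm
        (exp_summable_norm (2*|a|/cct β θ t)) (exp_summable_norm (2*|b|/cct β θ t))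
    apply Summable.of_nonneg_of_le _ _ hmajS
    · intro p
      apply mul_nonneg (abs_nonneg _)
      exact div_nonneg (Nat.cast_nonneg _) (pow_pos hct _).le
    · intro p
      obtain ⟨i, k⟩ := p
      rw [habs]
      simp only
      have hcommon : (0:ℝ) ≤ |D| * |a| ^ i * |b| ^ k /
          (cct β θ t ^ ((i+k+1)+1) * (i.factorial:ℝ) * (k.factorial:ℝ)) := by
        apply div_nonneg
        · positivity
        · exact le_of_lt (mul_pos (mul_pos (pow_pos hct _) (hfac i)) (hfac k))
      calc |D| * (|a| ^ i * |b| ^ k) /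
            ((i.factorial:ℝ) * ((i+1).factorial:ℝ) * (k.factorial:ℝ) * ((k+1).factorial:ℝ)) *
            (((i+k+1).factorial:ℝ) / cct β θ t ^ ((i+k+1)+1))
          = (|D| * |a| ^ i * |b| ^ k /
              (cct β θ t ^ ((i+k+1)+1) * (i.factorial:ℝ) * (k.factorial:ℝ))) *
            (((i+k+1).factorial:ℝ) / (((i+1).factorial:ℝ) * ((k+1).factorial:ℝ))) := by
            field_simp
        _ ≤ (|D| * |a| ^ i * |b| ^ k /
              (cct β θ t ^ ((i+k+1)+1) * (i.factorial:ℝ) * (k.factorial:ℝ))) *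
            (2^(i+k+1)) := mul_le_mul_of_nonneg_left (fact_le_two_pow i k) hcommon
        _ = (|D| * 2 / cct β θ t ^ 2) *
            (((2*|a|/cct β θ t) ^ i / (i.factorial:ℝ)) *
              ((2*|b|/cct β θ t) ^ k / (k.factorial:ℝ))) := by
            rw [div_pow, div_pow, mul_pow, mul_pow]
            rw [show cct β θ t ^ ((i+k+1)+1) = cct β θ t ^ i * cct β θ t ^ k * cct β θ t ^ 2 by
              ring]
            field_simp
            ring
  -- interchange sum and integral
  rw [show (fun y : ℝ => mm β θ α (u+t) y * qt β θ t x y)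
    = fun y : ℝ => ∑' p : ℕ × ℕ, K p * (y ^ (p.1+p.2+1) * Real.exp (-(cct β θ t * y)))
    from funext key]
  rw [← MeasureTheory.integral_tsum_of_summable_integral_norm hint
    (hsum.congr (fun p => (hnorm p).symm))]
  have hval : ∀ p : ℕ × ℕ,
      (∫ y in Set.Ioi (0:ℝ), K p * (y ^ (p.1+p.2+1) * Real.exp (-(cct β θ t * y))))
        = K p * (((p.1+p.2+1).factorial:ℝ) / cct β θ t ^ ((p.1+p.2+1)+1)) := by
    intro p
    rw [MeasureTheory.integral_const_mul, int_pow_exp (p.1+p.2+1) hct]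
  rw [tsum_congr hval]
  -- reduce to the star identity
  have hterm2 : ∀ p : ℕ × ℕ,
      K p * (((p.1+p.2+1).factorial:ℝ) / cct β θ t ^ ((p.1+p.2+1)+1))
        = (D / cct β θ t ^ 2) *
          ((a / cct β θ t) ^ p.1 * (b / cct β θ t) ^ p.2 * (((p.1+p.2+1).factorial:ℝ)) /
            ((p.1.factorial:ℝ) * ((p.1+1).factorial:ℝ) * (p.2.factorial:ℝ) *
              ((p.2+1).factorial:ℝ))) := by
    intro p
    obtain ⟨i, k⟩ := p
    rw [hK]
    simp only
    have f1 := (hfac i).ne'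
    have f2 := (hfac (i+1)).ne'
    have f3 := (hfac k).ne'
    have f4 := (hfac (k+1)).ne'
    rw [div_pow, div_pow]
    rw [show cct β θ t ^ ((i+k+1)+1) = cct β θ t ^ i * cct β θ t ^ k * cct β θ t ^ 2 by
      ring]
    field_simp
  rw [tsum_congr hterm2, tsum_mul_left, star_identity (a / cct β θ t) (b / cct β θ t)]
  -- final identification
  have hAB : a / cct β θ t * (b / cct β θ t) = α * x * Real.exp (2*β*θ*u) := by
    rw [ha, hb, cct_eq_mul β θ t]
    field_simp
  have harg : -(α / cc β θ (u+t)) + (a / cct β θ t + b / cct β θ t) + -(x * cc β θ t)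
      = -(α / cc β θ u) := by
    rw [ha, hb, cct_eq_mul β θ t, div_eq_mul_inv α (cc β θ (u+t)), cc_flow β θ u t]
    field_simp
    ring
  have e1 : Real.exp (-(α / cc β θ (u+t))) * Real.exp (a / cct β θ t + b / cct β θ t) *
      Real.exp (-(x * cc β θ t)) = Real.exp (-(α / cc β θ u)) := by
    rw [← Real.exp_add, ← Real.exp_add, harg]
  have hfinal : D / cct β θ t ^ 2 * Real.exp (a / cct β θ t + b / cct β θ t)
      = x * Real.exp (-(α / cc β θ u)) * Real.exp (2*β*θ*u) := by
    have hsplit : D / cct β θ t ^ 2 * Real.exp (a / cct β θ t + b / cct β θ t)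
        = (x * cc β θ t * Real.exp (2*β*θ*u) * Real.exp (2*β*θ*t) / cct β θ t) *
          (Real.exp (-(α / cc β θ (u+t))) * Real.exp (a / cct β θ t + b / cct β θ t) *
            Real.exp (-(x * cc β θ t))) := by
      rw [hD]
      field_simp
    rw [hsplit, e1, cct_eq_mul β θ t]
    field_simp
  rw [mm_eq β θ α u x, hAB, ← mul_assoc, hfinal]
  ring
end Part2

/-- The function `m^{α,θ}` is a space–time harmonic function of total mass one for the
CSBP kernels: (i) `∫_0^∞ m^{α,θ}(t,z) q^θ_t(z) dz = 1` for every `t > 0`;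
(ii) `∫_0^∞ m^{α,θ}(u+t,y) q^θ_t(x,y) dy = m^{α,θ}(u,x)` for all `u, t > 0` and `x ≥ 0`. -/
theorem mm_harmonic (β θ α : ℝ) (hβ : 0 < β) :
    (∀ t : ℝ, 0 < t → (∫ z in Set.Ioi (0 : ℝ), mm β θ α t z * qe β θ t z) = 1) ∧
    (∀ u t : ℝ, 0 < u → 0 < t → ∀ x : ℝ, 0 ≤ x →
      (∫ y in Set.Ioi (0 : ℝ), mm β θ α (u + t) y * qt β θ t x y) = mm β θ α u x) :=
  ⟨fun t ht => part_one β θ α hβ t ht,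
   fun u t hu ht x hx => part_two β θ α hβ u t hu ht x hx⟩
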